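/- Coherent achievability for each μ: Let σ > 0 and μ ∈ (0,1). Then sup over ξ ∈ ℂ \ {0} and measurable threshold functions T : ℂ → (0,∞) of (E_H[ d( P(|Hξ + W| ≥ T(H)) ‖ exp(−T(H)²/σ²) ) ]) / |ξ|² ≥ μ²/σ², where H ~ 𝒩_ℂ(0,1) and W ~ 𝒩_ℂ(0,σ²) are independent. (The choice T(h) = μ|h||ξ| with |ξ| → ∞ achieves this bound.) -/

import Mathlib

open MeasureTheory ProbabilityTheory Complex
open scoped ENNReal NNReal

/-- Circularly symmetric complex Gaussian measure `𝒩_ℂ(m, v)` on `ℂ ≅ ℝ²`: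
the product of two real Gaussians with means `Re m`, `Im m` and variance `v/2` each. -/
noncomputable def cgauss (m : ℂ) (v : ℝ) : Measure ℂ :=
  Measure.map Complex.measurableEquivRealProd.symm
    ((gaussianReal m.re (v / 2).toNNReal).prod (gaussianReal m.im (v / 2).toNNReal))

/-- Binary relative entropy `d(p‖q)`, i.e. the Kullback–Leibler divergence between
`Bernoulli(p)` and `Bernoulli(q)`, with the conventions `0·log 0 = 0` and
`d(p‖q) = +∞` if `q ∈ {0,1}` and `p ≠ q`. -/
noncomputable def bre (p q : ℝ) : ℝ≥0∞ :=
  if (q = 0 ∨ q = 1) ∧ p ≠ q then ⊤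
  else ENNReal.ofReal (p * Real.log (p / q) + (1 - p) * Real.log ((1 - p) / (1 - q)))

open Real Set Filter

lemma rpow_two' (x : ℝ) : x ^ (2:ℝ) = x ^ 2 := by
  rw [show (2:ℝ) = ((2:ℕ):ℝ) by norm_num, Real.rpow_natCast]

lemma integrable_sq_exp {b : ℝ} (hb : 0 < b) :
    Integrable (fun x : ℝ => x ^ 2 * Real.exp (-b * x ^ 2)) := by
  have h := integrable_rpow_mul_exp_neg_mul_sq hb (s := (2:ℝ)) (by norm_num)
  simpa [rpow_two'] using h

lemma integral_sq_exp {b : ℝ} (hb : 0 < b) :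
    ∫ x : ℝ, x ^ 2 * Real.exp (-b * x ^ 2) = Real.sqrt π / 2 * b ^ (-(3:ℝ)/2) := by
  have hIoi : ∫ x in Ioi (0:ℝ), x ^ 2 * Real.exp (-b * x ^ 2)
      = b ^ (-(3:ℝ)/2) * (1/2) * Real.Gamma ((3:ℝ)/2) := by
    have h := _root_.integral_rpow_mul_exp_neg_mul_rpow (p := 2) (q := 2) (by norm_num) (by norm_num) hb
    simp only [rpow_two'] at h
    rw [h]
    norm_num
  have hGamma : Real.Gamma ((3:ℝ)/2) = Real.sqrt π / 2 := by
    rw [show (3:ℝ)/2 = 1/2 + 1 by norm_num, Real.Gamma_add_one (by norm_num),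
      Real.Gamma_one_half_eq]
    ring
  have hsplit := integral_add_compl (measurableSet_Ioi (a := (0:ℝ))) (integrable_sq_exp hb)
  rw [compl_Ioi] at hsplit
  have hneg : ∫ x in Iic (0:ℝ), x ^ 2 * Real.exp (-b * x ^ 2)
      = ∫ x in Ioi (0:ℝ), x ^ 2 * Real.exp (-b * x ^ 2) := by
    rw [show (0:ℝ) = -0 by norm_num, ← integral_comp_neg_Ioi]
    simp
  rw [← hsplit, hneg, hIoi, hGamma]
  ring

lemma lintegral_sq_gaussianReal {w : ℝ≥0} (hw : w ≠ 0) :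
    ∫⁻ x, ENNReal.ofReal (x ^ 2) ∂(gaussianReal 0 w) = ENNReal.ofReal (w : ℝ) := by
  have hW : (0:ℝ) < (w:ℝ) := by exact_mod_cast pos_iff_ne_zero.mpr hw
  set b : ℝ := (2 * (w:ℝ))⁻¹ with hbdef
  have hb : 0 < b := by positivity
  have hpt : ∀ x : ℝ, gaussianPDFReal 0 w x * x ^ 2
      = (Real.sqrt (2 * π * w))⁻¹ * (x ^ 2 * Real.exp (-b * x ^ 2)) := by
    intro x
    rw [gaussianPDFReal]
    have hx : -(x - 0) ^ 2 / (2 * (w:ℝ)) = -b * x ^ 2 := by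
      rw [hbdef]; field_simp; ring
    rw [hx]; ring
  have hint : Integrable (fun x : ℝ => gaussianPDFReal 0 w x * x ^ 2) := by
    refine ((integrable_sq_exp hb).const_mul ((Real.sqrt (2 * π * w))⁻¹)).congr ?_
    exact Filter.Eventually.of_forall fun x => (hpt x).symm
  rw [gaussianReal_of_var_ne_zero _ hw,
      lintegral_withDensity_eq_lintegral_mul _ (measurable_gaussianPDF _ _)
        (by measurability)]
  have hpt2 : ∀ x : ℝ, (gaussianPDF 0 w * fun x => ENNReal.ofReal (x ^ 2)) x
      = ENNReal.ofReal (gaussianPDFReal 0 w x * x ^ 2) := by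
    intro x
    simp [gaussianPDF, ENNReal.ofReal_mul (gaussianPDFReal_nonneg 0 w x)]
  simp only [hpt2]
  rw [← ofReal_integral_eq_lintegral_ofReal hint
      (Filter.Eventually.of_forall fun x =>
        mul_nonneg (gaussianPDFReal_nonneg 0 w x) (sq_nonneg x))]
  congr 1
  have hcalc : ∫ x : ℝ, gaussianPDFReal 0 w x * x ^ 2
      = (Real.sqrt (2 * π * w))⁻¹ * ∫ x : ℝ, x ^ 2 * Real.exp (-b * x ^ 2) := by
    simp only [hpt]; rw [integral_const_mul]
  rw [hcalc, integral_sq_exp hb]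
  have h1 : b ^ (-(3:ℝ)/2) = (2*(w:ℝ)) ^ ((3:ℝ)/2) := by
    rw [hbdef, Real.inv_rpow (by positivity), neg_div, Real.rpow_neg (by positivity), inv_inv]
  have h2 : (2*(w:ℝ)) ^ ((3:ℝ)/2) = (2*(w:ℝ)) ^ ((1:ℝ)/2) * (2*(w:ℝ)) := by
    rw [show (3:ℝ)/2 = 1/2 + 1 by norm_num, Real.rpow_add (by positivity), Real.rpow_one]
  have h3 : Real.sqrt (2 * π * (w:ℝ)) = Real.sqrt π * (2*(w:ℝ)) ^ ((1:ℝ)/2) := by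
    rw [show 2 * π * (w:ℝ) = π * (2 * (w:ℝ)) by ring, Real.sqrt_mul pi_pos.le,
      Real.sqrt_eq_rpow]
    congr 1
    exact Real.sqrt_eq_rpow _
  have ht : (0:ℝ) < (2*(w:ℝ)) ^ ((1:ℝ)/2) := Real.rpow_pos_of_pos (by positivity) _
  have hπ : (0:ℝ) < Real.sqrt π := Real.sqrt_pos.mpr pi_pos
  rw [h1, h2, h3]
  field_simp

instance cgauss_prob (m : ℂ) (v : ℝ) : IsProbabilityMeasure (cgauss m v) :=
  Measure.isProbabilityMeasure_map (MeasurableEquiv.measurable _).aemeasurable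

lemma cgauss_translate (m : ℂ) (v : ℝ) :
    cgauss m v = Measure.map (fun y => y + m) (cgauss 0 v) := by
  unfold cgauss
  simp only [Complex.zero_re, Complex.zero_im]
  rw [Measure.map_map (measurable_add_const m) (MeasurableEquiv.measurable _)]
  have h1 : (fun y : ℂ => y + m) ∘ measurableEquivRealProd.symm
      = measurableEquivRealProd.symm ∘ Prod.map (fun x => x + m.re) (fun x => x + m.im) := by
    funext p
    apply Complex.ext <;> simp [measurableEquivRealProd_symm_apply]
  rw [h1, ← Measure.map_map (MeasurableEquiv.measurable _)
        (Measurable.prodMap (measurable_add_const m.re) (measurable_add_const m.im)),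
      ← Measure.map_prod_map _ _ (measurable_add_const m.re) (measurable_add_const m.im),
      gaussianReal_map_add_const, gaussianReal_map_add_const, zero_add, zero_add]

lemma cgauss_sq_moment {v : ℝ} (hv : 0 < v) :
    ∫⁻ y, ENNReal.ofReal (‖y‖ ^ 2) ∂(cgauss 0 v) = ENNReal.ofReal v := by
  have hw : ((v/2).toNNReal : ℝ≥0) ≠ 0 := by
    simp only [ne_eq, Real.toNNReal_eq_zero, not_le]; positivity
  have hwc : (((v/2).toNNReal : ℝ≥0) : ℝ) = v / 2 := Real.coe_toNNReal _ (by positivity)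
  unfold cgauss
  simp only [Complex.zero_re, Complex.zero_im]
  rw [lintegral_map ((continuous_norm.measurable.pow_const 2).ennreal_ofReal)
      (MeasurableEquiv.measurable _)]
  have hpt : ∀ p : ℝ × ℝ, ENNReal.ofReal (‖measurableEquivRealProd.symm p‖ ^ 2)
      = ENNReal.ofReal (p.1 ^ 2) + ENNReal.ofReal (p.2 ^ 2) := by
    intro p
    rw [← ENNReal.ofReal_add (sq_nonneg _) (sq_nonneg _)]
    congr 1
    rw [measurableEquivRealProd_symm_apply, Complex.sq_norm]
    simp [Complex.normSq_apply, pow_two]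
  simp only [hpt]
  rw [lintegral_add_left ((measurable_fst.pow_const 2).ennreal_ofReal),
      lintegral_prod _ ((measurable_fst.pow_const 2).ennreal_ofReal).aemeasurable,
      lintegral_prod _ ((measurable_snd.pow_const 2).ennreal_ofReal).aemeasurable]
  simp only [lintegral_const, measure_univ, mul_one]
  rw [lintegral_sq_gaussianReal hw, hwc,
    ← ENNReal.ofReal_add (by positivity) (by positivity)]
  norm_num

lemma cgauss_tail_le {v : ℝ} (hv : 0 < v) {r : ℝ} (hr : 0 < r) :
    (cgauss 0 v) {y : ℂ | r ≤ ‖y‖} ≤ ENNReal.ofReal (v / r ^ 2) := by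
  have hset : {y : ℂ | r ≤ ‖y‖}
      = {y : ℂ | ENNReal.ofReal (r ^ 2) ≤ ENNReal.ofReal (‖y‖ ^ 2)} := by
    ext y
    simp only [Set.mem_setOf_eq]
    rw [ENNReal.ofReal_le_ofReal_iff (by positivity),
      pow_le_pow_iff_left₀ hr.le (norm_nonneg _) two_ne_zero]
  have hcheb := mul_meas_ge_le_lintegral₀ (μ := cgauss 0 v)
      ((continuous_norm.measurable.pow_const 2).ennreal_ofReal).aemeasurable
      (ENNReal.ofReal (r ^ 2))
  rw [cgauss_sq_moment hv] at hcheb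
  rw [ENNReal.ofReal_div_of_pos (by positivity),
    ENNReal.le_div_iff_mul_le (Or.inl (by simp [ENNReal.ofReal_eq_zero]; positivity))
      (Or.inl ENNReal.ofReal_ne_top), mul_comm, hset]
  exact hcheb

lemma cgauss01_zero : (cgauss 0 1) ({0} : Set ℂ) = 0 := by
  have hw : (((1:ℝ)/2).toNNReal : ℝ≥0) ≠ 0 := by
    simp only [ne_eq, Real.toNNReal_eq_zero, not_le]; norm_num
  unfold cgauss
  simp only [Complex.zero_re, Complex.zero_im]
  rw [MeasurableEquiv.map_apply]
  have hpre : measurableEquivRealProd.symm ⁻¹' ({0} : Set ℂ) = {((0:ℝ),(0:ℝ))} := by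
    ext p
    simp only [Set.mem_preimage, Set.mem_singleton_iff]
    constructor
    · intro h
      have := congrArg measurableEquivRealProd h
      simpa [measurableEquivRealProd_apply] using this
    · rintro rfl
      apply Complex.ext <;> simp [measurableEquivRealProd_symm_apply]
  rw [hpre, ← Set.singleton_prod_singleton, Measure.prod_prod]
  have hz : (gaussianReal 0 ((1:ℝ)/2).toNNReal) ({0} : Set ℝ) = 0 :=
    gaussianReal_absolutelyContinuous 0 hw (measure_singleton 0)
  rw [hz, zero_mul]

lemma xlogx_ge {t : ℝ} (ht : 0 ≤ t) : t - 1 ≤ t * Real.log t := by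
  rcases eq_or_lt_of_le ht with h | h
  · simp [← h]
  · have h1 : Real.log t⁻¹ ≤ t⁻¹ - 1 := Real.log_le_sub_one_of_pos (by positivity)
    have h2 := mul_le_mul_of_nonneg_left h1 h.le
    rw [Real.log_inv, mul_neg, mul_sub, mul_inv_cancel₀ h.ne', mul_one] at h2
    linarith

lemma bre_ge {p : ℝ} (x : ℝ) (hp0 : 0 ≤ p) (hp1 : p ≤ 1) (hx : 0 < x) :
    ENNReal.ofReal (p * x - 2) ≤ bre p (Real.exp (-x)) := by
  have hq0 : 0 < Real.exp (-x) := Real.exp_pos _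
  have hq1 : Real.exp (-x) < 1 := by
    rw [← Real.exp_zero]
    exact Real.exp_lt_exp.mpr (by linarith)
  rw [bre, if_neg]
  swap
  · rintro ⟨h1 | h1, -⟩
    · exact absurd h1 hq0.ne'
    · exact absurd h1 hq1.ne
  apply ENNReal.ofReal_le_ofReal
  have term1 : p * x - 1 ≤ p * Real.log (p / Real.exp (-x)) := by
    rcases eq_or_lt_of_le hp0 with h | h
    · simp [← h]
    · rw [Real.log_div h.ne' hq0.ne', Real.log_exp]
      nlinarith [xlogx_ge hp0]
  have term2 : -1 ≤ (1 - p) * Real.log ((1 - p) / (1 - Real.exp (-x))) := by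
    rcases eq_or_lt_of_le hp1 with h | h
    · simp [h]
    · have h1p : 0 < 1 - p := by linarith
      have hq1' : 0 < 1 - Real.exp (-x) := by linarith
      rw [Real.log_div h1p.ne' hq1'.ne']
      have hl : Real.log (1 - Real.exp (-x)) ≤ 0 := Real.log_nonpos (by linarith) (by linarith)
      nlinarith [xlogx_ge h1p.le, mul_nonpos_of_nonneg_of_nonpos h1p.le hl]
  linarith

/-- Coherent achievability for each `μ ∈ (0,1)`: the best rate per unit-energy achievable
on the coherent channel with radial one-bit quantizers (fading-dependent thresholds) is at
least `μ²/σ²`; the choice `T(h) = μ|h||ξ|` with `|ξ| → ∞` achieves this bound. -/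
theorem coherent_achievability_mu (σ : ℝ) (hσ : 0 < σ) (μ : ℝ) (hμ0 : 0 < μ) (hμ1 : μ < 1) :
    ENNReal.ofReal (μ ^ 2 / σ ^ 2) ≤
      ⨆ (ξ : ℂ) (_ : ξ ≠ 0) (T : ℂ → ℝ) (_ : Measurable T ∧ ∀ h, 0 < T h),
        (∫⁻ h, bre ((cgauss (h * ξ) (σ ^ 2)) {y : ℂ | T h ≤ ‖y‖}).toReal
            (Real.exp (-(T h) ^ 2 / σ ^ 2)) ∂(cgauss 0 1)) /
          ENNReal.ofReal (‖ξ‖ ^ 2) := by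
  have h1μ : 0 < 1 - μ := by linarith
  set S : ℝ≥0∞ :=
      ⨆ (ξ : ℂ) (_ : ξ ≠ 0) (T : ℂ → ℝ) (_ : Measurable T ∧ ∀ h, 0 < T h),
        (∫⁻ h, bre ((cgauss (h * ξ) (σ ^ 2)) {y : ℂ | T h ≤ ‖y‖}).toReal
            (Real.exp (-(T h) ^ 2 / σ ^ 2)) ∂(cgauss 0 1)) /
          ENNReal.ofReal (‖ξ‖ ^ 2) with hS
  set K : ℝ := μ ^ 2 / (1 - μ) ^ 2 + 2 with hK
  set f : ℕ → ℂ → ℝ≥0∞ :=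
    fun n h => ENNReal.ofReal (μ ^ 2 * ‖h‖ ^ 2 / σ ^ 2 - K / ((n : ℝ) + 1) ^ 2)
    with hf
  have hfmeas : ∀ n, Measurable (f n) := fun n =>
    ((((continuous_norm.measurable.pow_const 2).const_mul (μ ^ 2)).div_const
      (σ ^ 2)).sub measurable_const).ennreal_ofReal
  have hae0 : ∀ᵐ h ∂(cgauss 0 1), h ≠ (0 : ℂ) := by
    rw [ae_iff]
    convert cgauss01_zero using 2
    ext h; simp
  have key : ∀ n : ℕ, (∫⁻ h, f n h ∂(cgauss 0 1)) ≤ S := by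
    intro n
    set N : ℝ := (n : ℝ) + 1 with hN
    have hNpos : 0 < N := by positivity
    set ξ : ℂ := (N : ℂ) with hξdef
    have hξ : ξ ≠ 0 := by
      simp only [hξdef, ne_eq, Complex.ofReal_eq_zero]
      exact hNpos.ne'
    have habsξ : ‖ξ‖ = N := by
      rw [hξdef, Complex.norm_real, Real.norm_eq_abs, abs_of_pos hNpos]
    set T : ℂ → ℝ := fun h => if h = 0 then 1 else μ * ‖h‖ * N with hT
    have hTmeas : Measurable T := by
      refine Measurable.ite ?_ measurable_const
        ((continuous_norm.measurable.const_mul μ).mul_const N)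
      simpa using measurableSet_singleton (0 : ℂ)
    have hTpos : ∀ h, 0 < T h := by
      intro h
      by_cases hh : h = 0
      · simp [hT, hh]
      · simp only [hT, if_neg hh]
        exact mul_pos (mul_pos hμ0 (norm_pos_iff.mpr hh)) hNpos
    have step : (∫⁻ h, f n h ∂(cgauss 0 1)) ≤
        (∫⁻ h, bre ((cgauss (h * ξ) (σ ^ 2)) {y : ℂ | T h ≤ ‖y‖}).toReal
            (Real.exp (-(T h) ^ 2 / σ ^ 2)) ∂(cgauss 0 1)) /
          ENNReal.ofReal (‖ξ‖ ^ 2) := by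
      rw [habsξ]
      refine (ENNReal.le_div_iff_mul_le
        (Or.inl (ENNReal.ofReal_pos.mpr (by positivity)).ne')
        (Or.inl ENNReal.ofReal_ne_top)).mpr ?_
      calc (∫⁻ h, f n h ∂(cgauss 0 1)) * ENNReal.ofReal (N ^ 2)
          = ∫⁻ h, ENNReal.ofReal (N ^ 2) * f n h ∂(cgauss 0 1) := by
            rw [lintegral_const_mul _ (hfmeas n), mul_comm]
        _ ≤ _ := by
            apply lintegral_mono_ae
            filter_upwards [hae0] with h hh
            have hA : 0 < ‖h‖ := norm_pos_iff.mpr hh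
            have hTh : T h = μ * ‖h‖ * N := by simp only [hT, if_neg hh]
            have hThpos : 0 < T h := hTpos h
            have hxpos : 0 < T h ^ 2 / σ ^ 2 := div_pos (pow_pos hThpos 2) (pow_pos hσ 2)
            have hexp : Real.exp (-(T h) ^ 2 / σ ^ 2) = Real.exp (-(T h ^ 2 / σ ^ 2)) := by
              rw [neg_div]
            have hp1 : ((cgauss (h * ξ) (σ ^ 2)) {y : ℂ | T h ≤ ‖y‖}).toReal ≤ 1 := by
              have h1 : (cgauss (h * ξ) (σ ^ 2)) {y : ℂ | T h ≤ ‖y‖} ≤ 1 :=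
                prob_le_one
              simpa using ENNReal.toReal_mono ENNReal.one_ne_top h1
            have hbre := bre_ge (T h ^ 2 / σ ^ 2) ENNReal.toReal_nonneg hp1 hxpos
            rw [hexp]
            refine le_trans ?_ hbre
            simp only [hf]
            rw [← ENNReal.ofReal_mul (by positivity : (0 : ℝ) ≤ N ^ 2)]
            apply ENNReal.ofReal_le_ofReal
            -- real inequality
            have hSmeas : MeasurableSet {y : ℂ | T h ≤ ‖y‖} :=
              (isClosed_le continuous_const continuous_norm).measurableSet
            have hS2meas : MeasurableSet
                {y : ℂ | (1 - μ) * (‖h‖ * N) ≤ ‖y - h * ξ‖} :=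
              (isClosed_le continuous_const
                (continuous_norm.comp (continuous_id.sub continuous_const))).measurableSet
            have hsub : {y : ℂ | ‖y‖ < T h} ⊆
                {y : ℂ | (1 - μ) * (‖h‖ * N) ≤ ‖y - h * ξ‖} := by
              intro y hy
              simp only [Set.mem_setOf_eq] at hy ⊢
              have h3 : ‖h * ξ‖ - ‖y‖ ≤ ‖h * ξ - y‖ := norm_sub_norm_le _ _
              rw [norm_sub_rev] at h3
              rw [norm_mul, habsξ] at h3
              rw [hTh] at hy
              nlinarith
            have htrans : (cgauss (h * ξ) (σ ^ 2))
                  {y : ℂ | (1 - μ) * (‖h‖ * N) ≤ ‖y - h * ξ‖}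
                = (cgauss 0 (σ ^ 2))
                  {y : ℂ | (1 - μ) * (‖h‖ * N) ≤ ‖y‖} := by
              rw [cgauss_translate (h * ξ) (σ ^ 2),
                Measure.map_apply (measurable_add_const _) hS2meas]
              congr 1
              ext y
              simp [add_sub_cancel_right]
            have hr : 0 < (1 - μ) * (‖h‖ * N) :=
              mul_pos h1μ (mul_pos hA hNpos)
            have hcompl : (cgauss (h * ξ) (σ ^ 2)) {y : ℂ | ‖y‖ < T h}
                = 1 - (cgauss (h * ξ) (σ ^ 2)) {y : ℂ | T h ≤ ‖y‖} := by
              rw [← prob_compl_eq_one_sub hSmeas]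
              congr 1
              ext y
              simp [not_le]
            have hb1 : (1 : ℝ≥0∞) - (cgauss (h * ξ) (σ ^ 2)) {y : ℂ | T h ≤ ‖y‖}
                ≤ ENNReal.ofReal (σ ^ 2 / ((1 - μ) * (‖h‖ * N)) ^ 2) := by
              rw [← hcompl]
              exact le_trans (le_trans (measure_mono hsub) (le_of_eq htrans))
                (cgauss_tail_le (by positivity) hr)
            have hb2 : 1 - ((cgauss (h * ξ) (σ ^ 2)) {y : ℂ | T h ≤ ‖y‖}).toReal
                ≤ σ ^ 2 / ((1 - μ) * (‖h‖ * N)) ^ 2 := by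
              have h4 := ENNReal.toReal_mono ENNReal.ofReal_ne_top hb1
              rw [ENNReal.toReal_ofReal (by positivity),
                ENNReal.toReal_sub_of_le prob_le_one ENNReal.one_ne_top] at h4
              simpa using h4
            have e2 : (1 - ((cgauss (h * ξ) (σ ^ 2)) {y : ℂ | T h ≤ ‖y‖}).toReal)
                  * (T h ^ 2 / σ ^ 2) ≤ μ ^ 2 / (1 - μ) ^ 2 := by
              calc _ ≤ (σ ^ 2 / ((1 - μ) * (‖h‖ * N)) ^ 2) * (T h ^ 2 / σ ^ 2) :=
                    mul_le_mul_of_nonneg_right hb2 hxpos.le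
                _ = μ ^ 2 / (1 - μ) ^ 2 := by
                    rw [hTh]
                    field_simp
            have e1 : N ^ 2 * (μ ^ 2 * ‖h‖ ^ 2 / σ ^ 2 - K / N ^ 2)
                = T h ^ 2 / σ ^ 2 - K := by
              rw [hTh]
              field_simp
            rw [e1, hK]
            nlinarith [e2]
    refine le_trans step ?_
    rw [hS]
    exact le_iSup_of_le ξ (le_iSup_of_le hξ (le_iSup_of_le T (le_iSup_of_le ⟨hTmeas, hTpos⟩
      le_rfl)))
  calc ENNReal.ofReal (μ ^ 2 / σ ^ 2)
      = ∫⁻ h, ENNReal.ofReal (μ ^ 2 * ‖h‖ ^ 2 / σ ^ 2) ∂(cgauss 0 1) := by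
        have hpt : ∀ h : ℂ, ENNReal.ofReal (μ ^ 2 * ‖h‖ ^ 2 / σ ^ 2)
            = ENNReal.ofReal (μ ^ 2 / σ ^ 2) * ENNReal.ofReal (‖h‖ ^ 2) := by
          intro h
          rw [← ENNReal.ofReal_mul (by positivity)]
          congr 1
          ring
        simp only [hpt]
        rw [lintegral_const_mul _
            ((continuous_norm.measurable.pow_const 2).ennreal_ofReal),
          cgauss_sq_moment one_pos]
        simp
    _ ≤ Filter.liminf (fun n => ∫⁻ h, f n h ∂(cgauss 0 1)) Filter.atTop := by
        refine le_trans (le_of_eq (lintegral_congr fun h => ?_)) (lintegral_liminf_le hfmeas)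
        have hg : Filter.Tendsto (fun n : ℕ => K / ((n : ℝ) + 1) ^ 2) Filter.atTop (nhds 0) := by
          apply Filter.Tendsto.div_atTop tendsto_const_nhds
          have := (tendsto_pow_atTop (two_ne_zero)).comp
            (tendsto_atTop_add_const_right Filter.atTop (1 : ℝ) tendsto_natCast_atTop_atTop)
          exact this
        have htend : Filter.Tendsto (fun n : ℕ => f n h) Filter.atTop
            (nhds (ENNReal.ofReal (μ ^ 2 * ‖h‖ ^ 2 / σ ^ 2))) := by
          simp only [hf]
          apply ENNReal.tendsto_ofReal
          simpa using tendsto_const_nhds.sub hg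
        exact htend.liminf_eq.symm
    _ ≤ S := by
        refine le_trans (Filter.liminf_le_liminf (Filter.Eventually.of_forall key)) ?_
        simp [Filter.liminf_const]
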